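/- arXiv:2003.00669 — 2 statements merged into one kernel-verified Lean document; each statement's English description precedes it below -/
import Mathlib

section
/- If a gap function g : ℕ → ℕ is padding stable (i.e., g(2^n + n) < 2^{g(n)} + g(n) for all n > 1) and T ∈ TALLY(d(n), g(n)), then Pad(T) = {1^{2^n+n} : 1^n ∈ T} is also in TALLY(d(n), g(n)). -/
/-- A tally set (viewed as a set of lengths) is in `TALLY(d, g)` if it has at most
`d(n)` elements `≤ n` and consecutive elements `n < m` satisfy `g(n) < m`. -/
def InTALLY (d g : ℕ → ℕ) (T : Set ℕ) : Prop :=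
  (∀ n, (T ∩ Set.Iic n).ncard ≤ d n) ∧ ∀ n ∈ T, ∀ m ∈ T, n < m → g n < m

lemma pad_strictMono : StrictMono (fun n : ℕ => 2 ^ n + n) := by
  intro a b hab
  exact Nat.add_lt_add (Nat.pow_lt_pow_right one_lt_two hab) hab

/-- If the gap function `g` is padding stable, i.e. `g(2^n + n) < 2^{g(n)} + g(n)` for
all `n > 1`, and `T ∈ TALLY(d, g)` (with all elements of `T` greater than `1`), then
`Pad(T) = {2^n + n : n ∈ T}` is also in `TALLY(d, g)`. -/
theorem stmt5 (d g : ℕ → ℕ) (hd : Monotone d) (hg : Monotone g)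
    (hstable : ∀ n : ℕ, 1 < n → g (2 ^ n + n) < 2 ^ (g n) + g n)
    (T : Set ℕ) (hT1 : ∀ n ∈ T, 1 < n) (hT : InTALLY d g T) :
    InTALLY d g ((fun n => 2 ^ n + n) '' T) := by
  obtain ⟨hcard, hgap⟩ := hT
  constructor
  · intro n
    have hsub : ((fun n : ℕ => 2 ^ n + n) '' T) ∩ Set.Iic n ⊆
        (fun n : ℕ => 2 ^ n + n) '' (T ∩ Set.Iic n) := by
      rintro x ⟨⟨m, hm, rfl⟩, hx⟩
      exact ⟨m, ⟨hm, le_trans (Nat.le_add_left m _) hx⟩, rfl⟩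
    have hfin : (T ∩ Set.Iic n).Finite :=
      Set.Finite.subset (Set.finite_Iic n) (Set.inter_subset_right)
    calc (((fun n : ℕ => 2 ^ n + n) '' T) ∩ Set.Iic n).ncard
        ≤ ((fun n : ℕ => 2 ^ n + n) '' (T ∩ Set.Iic n)).ncard :=
          Set.ncard_le_ncard hsub (hfin.image _)
      _ ≤ (T ∩ Set.Iic n).ncard := Set.ncard_image_le hfin
      _ ≤ d n := hcard n
  · rintro x ⟨a, ha, rfl⟩ y ⟨b, hb, rfl⟩ hxy
    have hab : a < b := pad_strictMono.lt_iff_lt.mp hxy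
    have h1 : g a < b := hgap a ha b hb hab
    have h2 : g (2 ^ a + a) < 2 ^ (g a) + g a := hstable a (hT1 a ha)
    exact h2.trans_le (le_of_lt (pad_strictMono h1))
end

section
/- Let d, g : ℕ → ℕ be nondecreasing unbounded functions. Then there exists a strictly increasing unbounded function f : ℕ → ℕ such that every set S ⊆ ℕ contained in the range of f satisfies: |S ∩ {0,…,n}| ≤ d(n) for all n in the range of applicability (specifically for all n ≥ min of S when d takes positive values there), and for any n < m both in S, g(n) < m. In particular TALLY[f] ⊆ TALLY(d, g). -/
open Filter

/-- Given nondecreasing unbounded `d, g : ℕ → ℕ`, there is a strictly increasing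
unbounded `f : ℕ → ℕ` such that every `S ⊆ range f` satisfies the `TALLY(d, g)`
conditions: `|S ∩ {0,…,n}| ≤ d(n)` for all `n`, and `g(n) < m` whenever
`n, m ∈ S` with `n < m`.  In particular `TALLY[f] ⊆ TALLY(d, g)`. -/
theorem stmt9 (d g : ℕ → ℕ) (hd : Monotone d) (hg : Monotone g)
    (hdu : Tendsto d atTop atTop) (hgu : Tendsto g atTop atTop) :
    ∃ f : ℕ → ℕ, StrictMono f ∧ Tendsto f atTop atTop ∧
      ∀ S : Set ℕ, S ⊆ Set.range f →
        (∀ n, (S ∩ Set.Iic n).ncard ≤ d n) ∧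
        (∀ n ∈ S, ∀ m ∈ S, n < m → g n < m) := by
  have hN : ∀ k : ℕ, ∃ n, k ≤ d n := fun k =>
    (hdu.eventually (eventually_ge_atTop k)).exists
  choose N hNd using hN
  set f : ℕ → ℕ := fun k =>
    Nat.rec (N 1) (fun k fk => max (N (k + 2)) (max (g fk + 1) (fk + 1))) k with hf
  have hfs : ∀ k, f (k + 1) = max (N (k + 2)) (max (g (f k) + 1) (f k + 1)) :=
    fun k => rfl
  have hmono : StrictMono f := by
    apply strictMono_nat_of_lt_succ
    intro k
    have : f k + 1 ≤ f (k + 1) := by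
      rw [hfs]; exact le_max_of_le_right (le_max_right _ _)
    omega
  have hdk : ∀ k, k + 1 ≤ d (f k) := by
    intro k
    have hge : N (k + 1) ≤ f k := by
      cases k with
      | zero => exact le_refl _
      | succ k => rw [hfs]; exact le_max_left _ _
    exact le_trans (hNd (k + 1)) (hd hge)
  have hgk : ∀ k m, k < m → g (f k) < f m := by
    intro k m hkm
    have h1 : g (f k) + 1 ≤ f (k + 1) := by
      rw [hfs]; exact le_max_of_le_right (le_max_left _ _)
    have h2 : f (k + 1) ≤ f m := hmono.monotone hkm
    omega
  refine ⟨f, hmono, hmono.tendsto_atTop, ?_⟩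
  intro S hS
  constructor
  · intro n
    set K : Set ℕ := {k | f k ≤ n} with hK
    have hKsub : K ⊆ Set.Iic n := fun k hk =>
      le_trans hmono.le_apply hk
    by_cases hne : K.Nonempty
    · have hbdd : BddAbove K := ⟨n, hKsub⟩
      set k₀ := sSup K with hk₀
      have hk₀mem : k₀ ∈ K := Nat.sSup_mem hne hbdd
      have hsub : S ∩ Set.Iic n ⊆ f '' Set.Iic k₀ := by
        rintro x ⟨hxS, hxn⟩
        obtain ⟨k, rfl⟩ := hS hxS
        exact ⟨k, le_csSup hbdd hxn, rfl⟩
      have hfin : (f '' Set.Iic k₀).Finite := (Set.finite_Iic k₀).image f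
      calc (S ∩ Set.Iic n).ncard ≤ (f '' Set.Iic k₀).ncard :=
            Set.ncard_le_ncard hsub hfin
        _ = (Set.Iic k₀).ncard := Set.ncard_image_of_injective _ hmono.injective
        _ = k₀ + 1 := by
            rw [← Finset.coe_Iic, Set.ncard_coe_finset, Nat.card_Iic]
        _ ≤ d (f k₀) := hdk k₀
        _ ≤ d n := hd hk₀mem
    · have : S ∩ Set.Iic n = ∅ := by
        ext x
        simp only [Set.mem_inter_iff, Set.mem_Iic, Set.mem_empty_iff_false, iff_false]
        rintro ⟨hxS, hxn⟩
        obtain ⟨k, rfl⟩ := hS hxS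
        exact hne ⟨k, hxn⟩
      simp [this]
  · intro a ha b hb hab
    obtain ⟨k, rfl⟩ := hS ha
    obtain ⟨m, rfl⟩ := hS hb
    exact hgk k m (hmono.lt_iff_lt.mp hab)
end
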